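/- Let Γ be a strictly Deza graph with parameters (n, k, b, a) with k = b + 1 and β(v) > 1 for every vertex v. (1) If v is a vertex of type (B) and u ∈ B(v), then B[u] = B[v] and u is of type (B). (2) If v is a vertex of type (C) and u ∈ B(v), then B[u] = B[v] and u is of type (C). -/

import Mathlib

open Finset SimpleGraph

universe u v

/-- The number of common neighbours of two vertices. -/
def commonNbrs {V : Type u} [Fintype V] [DecidableEq V] (G : SimpleGraph V)
    [DecidableRel G.Adj] (x y : V) : ℕ :=
  (G.neighborFinset x ∩ G.neighborFinset y).card

/-- `G` is a Deza graph with parameters `(n, k, b, a)`: a nonempty `k`-regular graph on `n`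
vertices in which any two distinct vertices have either `b` or `a` common neighbours,
where `b ≥ a`. -/
def IsDezaGraph {V : Type u} [Fintype V] [DecidableEq V] (G : SimpleGraph V)
    [DecidableRel G.Adj] (n k b a : ℕ) : Prop :=
  G ≠ ⊥ ∧ Fintype.card V = n ∧ G.IsRegularOfDegree k ∧ a ≤ b ∧
    ∀ x y : V, x ≠ y → commonNbrs G x y = b ∨ commonNbrs G x y = a

/-- `G` is a strictly Deza graph with parameters `(n, k, b, a)`: a Deza graph of
diameter 2 that is not strongly regular. -/
def IsStrictlyDezaGraph {V : Type u} [Fintype V] [DecidableEq V] (G : SimpleGraph V)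
    [DecidableRel G.Adj] (n k b a : ℕ) : Prop :=
  IsDezaGraph G n k b a ∧ G.Connected ∧ (∀ x y : V, G.dist x y ≤ 2) ∧
    (∃ x y : V, G.dist x y = 2) ∧ ¬ ∃ ℓ μ : ℕ, G.IsSRGWith n k ℓ μ

/-- `B(v)`: the set of vertices `u ≠ v` having exactly `b` common neighbours with `v`. -/
def dezaB {V : Type u} [Fintype V] [DecidableEq V] (G : SimpleGraph V)
    [DecidableRel G.Adj] (b : ℕ) (v : V) : Finset V :=
  univ.filter fun u => u ≠ v ∧ commonNbrs G u v = b

/-- `A(v)`: the set of vertices `u ≠ v` having exactly `a` common neighbours with `v`. -/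
def dezaA {V : Type u} [Fintype V] [DecidableEq V] (G : SimpleGraph V)
    [DecidableRel G.Adj] (a : ℕ) (v : V) : Finset V :=
  univ.filter fun u => u ≠ v ∧ commonNbrs G u v = a

/-- `B[v] = B(v) ∪ {v}`. -/
def dezaBc {V : Type u} [Fintype V] [DecidableEq V] (G : SimpleGraph V)
    [DecidableRel G.Adj] (b : ℕ) (v : V) : Finset V :=
  insert v (dezaB G b v)

/-- A vertex `v` is of type (A) if `B(v) ∩ N(v) = ∅`. -/
def IsTypeA {V : Type u} [Fintype V] [DecidableEq V] (G : SimpleGraph V)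
    [DecidableRel G.Adj] (b : ℕ) (v : V) : Prop :=
  dezaB G b v ∩ G.neighborFinset v = ∅

/-- A vertex `v` is of type (B) if `B(v) ⊆ N(v)`. -/
def IsTypeB {V : Type u} [Fintype V] [DecidableEq V] (G : SimpleGraph V)
    [DecidableRel G.Adj] (b : ℕ) (v : V) : Prop :=
  dezaB G b v ⊆ G.neighborFinset v

/-- A vertex `v` is of type (C) if `|B(v) ∩ N(v)| = 1`. -/
def IsTypeC {V : Type u} [Fintype V] [DecidableEq V] (G : SimpleGraph V)
    [DecidableRel G.Adj] (b : ℕ) (v : V) : Prop :=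
  (dezaB G b v ∩ G.neighborFinset v).card = 1

/-- A vertex `x` of type (A) is of type (A1) if there exists `y ∈ N(x)` with
`N(x) \ N(xᵢ) = {y}` for every `xᵢ ∈ B(x)`. -/
def IsTypeA1 {V : Type u} [Fintype V] [DecidableEq V] (G : SimpleGraph V)
    [DecidableRel G.Adj] (b : ℕ) (x : V) : Prop :=
  IsTypeA G b x ∧ ∃ y ∈ G.neighborFinset x,
    ∀ xi ∈ dezaB G b x, G.neighborFinset x \ G.neighborFinset xi = {y}

/-- A vertex `x` of type (A) is of type (A2) if there exists `z ∉ N[x]` with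
`N(xᵢ) \ N(x) = {z}` for every `xᵢ ∈ B(x)`. -/
def IsTypeA2 {V : Type u} [Fintype V] [DecidableEq V] (G : SimpleGraph V)
    [DecidableRel G.Adj] (b : ℕ) (x : V) : Prop :=
  IsTypeA G b x ∧ ∃ z ∉ insert x (G.neighborFinset x),
    ∀ xi ∈ dezaB G b x, G.neighborFinset xi \ G.neighborFinset x = {z}

/-- The complete multipartite graph with `m` parts of size `t`. -/
def completeMultipartiteGr (m t : ℕ) : SimpleGraph (Fin m × Fin t) where
  Adj u v := u.1 ≠ v.1
  symm := ⟨fun _ _ h => Ne.symm h⟩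
  loopless := ⟨fun _ h => h rfl⟩

/-- The 2-clique extension of a graph `H`: vertices `(u, i)` and `(v, j)` are adjacent
iff `u ~ v` in `H`, or `u = v` and `i ≠ j`. -/
def cliqueExt2 {W : Type v} (H : SimpleGraph W) : SimpleGraph (W × Fin 2) where
  Adj u v := H.Adj u.1 v.1 ∨ (u.1 = v.1 ∧ u.2 ≠ v.2)
  symm := by
    constructor
    intro u v h
    rcases h with h | ⟨h1, h2⟩
    · exact Or.inl h.symm
    · exact Or.inr ⟨h1.symm, h2.symm⟩
  loopless := by
    constructor
    intro u h
    rcases h with h | ⟨_, h2⟩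
    · exact H.loopless.irrefl _ h
    · exact h2 rfl

section DezaAux

variable {V : Type u} [Fintype V] [DecidableEq V] (G : SimpleGraph V)
    [DecidableRel G.Adj]

lemma dz_comm (x y : V) : commonNbrs G x y = commonNbrs G y x := by
  unfold commonNbrs; rw [Finset.inter_comm]

lemma dz_mem_dezaB {b : ℕ} {u v : V} :
    u ∈ dezaB G b v ↔ u ≠ v ∧ commonNbrs G u v = b := by
  simp [dezaB]

lemma dz_card_common (x y : V) :
    Fintype.card (G.commonNeighbors x y) = commonNbrs G x y := by
  rw [commonNbrs, ← Set.toFinset_card]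
  congr 1
  ext w
  rw [Set.mem_toFinset]
  simp [SimpleGraph.commonNeighbors, SimpleGraph.mem_neighborFinset]

variable {G}

lemma dz_mem_dezaBc {b : ℕ} {w v : V} :
    w ∈ dezaBc G b v ↔ w = v ∨ w ∈ dezaB G b v := by
  simp [dezaBc, Finset.mem_insert]

lemma dz_self_mem_dezaBc (b : ℕ) (v : V) : v ∈ dezaBc G b v :=
  dz_mem_dezaBc.mpr (Or.inl rfl)

lemma dz_subset_dezaBc (b : ℕ) (v : V) : dezaB G b v ⊆ dezaBc G b v :=
  fun w hw => dz_mem_dezaBc.mpr (Or.inr hw)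

lemma dz_card_nbr {k : ℕ} (hreg : G.IsRegularOfDegree k) (v : V) :
    (G.neighborFinset v).card = k := by
  rw [G.card_neighborFinset_eq_degree]
  exact hreg v

lemma dz_lt {n k b a : ℕ} (hG : IsStrictlyDezaGraph G n k b a) : a < b := by
  obtain ⟨⟨_, hcard, hreg, hba, hdich⟩, _, _, _, hnsrg⟩ := hG
  rcases lt_or_eq_of_le hba with h | h
  · exact h
  · exfalso
    refine hnsrg ⟨b, b, hcard, hreg, ?_, ?_⟩
    · intro x y hadj
      rw [dz_card_common]
      rcases hdich x y hadj.ne with h' | h'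
      · exact h'
      · rw [h', h]
    · intro x y hne _
      rw [dz_card_common]
      rcases hdich x y hne with h' | h'
      · exact h'
      · rw [h', h]

/-- P1: an adjacent vertex with `b = k - 1` common neighbours has the same
closed neighbourhood. -/
lemma dzP1 {k b : ℕ} (hreg : G.IsRegularOfDegree k) (hk : k = b + 1)
    {x v : V} (hadj : G.Adj x v) (hb : commonNbrs G x v = b) :
    G.neighborFinset x = insert v (G.neighborFinset x ∩ G.neighborFinset v) ∧
    G.neighborFinset v = insert x (G.neighborFinset x ∩ G.neighborFinset v) := by
  have hvx : v ∈ G.neighborFinset x := (G.mem_neighborFinset x v).mpr hadj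
  have hxv : x ∈ G.neighborFinset v := (G.mem_neighborFinset v x).mpr hadj.symm
  set S := G.neighborFinset x ∩ G.neighborFinset v with hS
  have hcS : S.card = b := hb
  have hvS : v ∉ S := fun h =>
    G.notMem_neighborFinset_self v (Finset.mem_of_mem_inter_right h)
  have hxS : x ∉ S := fun h =>
    G.notMem_neighborFinset_self x (Finset.mem_of_mem_inter_left h)
  constructor
  · have hsub : S ⊆ (G.neighborFinset x).erase v := by
      intro w hw
      exact Finset.mem_erase.mpr ⟨fun h => hvS (h ▸ hw), Finset.mem_of_mem_inter_left hw⟩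
    have hc : ((G.neighborFinset x).erase v).card = b := by
      rw [Finset.card_erase_of_mem hvx, dz_card_nbr hreg, hk]
      omega
    have := Finset.eq_of_subset_of_card_le hsub (by rw [hc, hcS])
    rw [this, Finset.insert_erase hvx]
  · have hsub : S ⊆ (G.neighborFinset v).erase x := by
      intro w hw
      exact Finset.mem_erase.mpr ⟨fun h => hxS (h ▸ hw), Finset.mem_of_mem_inter_right hw⟩
    have hc : ((G.neighborFinset v).erase x).card = b := by
      rw [Finset.card_erase_of_mem hxv, dz_card_nbr hreg, hk]
      omega
    have := Finset.eq_of_subset_of_card_le hsub (by rw [hc, hcS])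
    rw [this, Finset.insert_erase hxv]

/-- P2: pointwise equality of common-neighbour counts for twins. -/
lemma dzP2 {k b : ℕ} (hreg : G.IsRegularOfDegree k) (hk : k = b + 1)
    {x v : V} (hadj : G.Adj x v) (hb : commonNbrs G x v = b) :
    ∀ w : V, w ≠ x → w ≠ v → commonNbrs G x w = commonNbrs G v w := by
  obtain ⟨hx, hv⟩ := dzP1 hreg hk hadj hb
  set S := G.neighborFinset x ∩ G.neighborFinset v with hS
  have hvS : v ∉ S := fun h =>
    G.notMem_neighborFinset_self v (Finset.mem_of_mem_inter_right h)
  have hxS : x ∉ S := fun h =>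
    G.notMem_neighborFinset_self x (Finset.mem_of_mem_inter_left h)
  intro w hwx hwv
  unfold commonNbrs
  rw [hx, hv]
  by_cases hw : w ∈ S
  · have hvw : v ∈ G.neighborFinset w := by
      rw [G.mem_neighborFinset]
      exact ((G.mem_neighborFinset v w).mp (Finset.mem_of_mem_inter_right hw)).symm
    have hxw : x ∈ G.neighborFinset w := by
      rw [G.mem_neighborFinset]
      exact ((G.mem_neighborFinset x w).mp (Finset.mem_of_mem_inter_left hw)).symm
    rw [Finset.insert_inter_of_mem hvw, Finset.insert_inter_of_mem hxw,
      Finset.card_insert_of_notMem (fun h => hvS (Finset.mem_of_mem_inter_left h)),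
      Finset.card_insert_of_notMem (fun h => hxS (Finset.mem_of_mem_inter_left h))]
  · have hvw : v ∉ G.neighborFinset w := by
      rw [G.mem_neighborFinset]
      intro h
      have : w ∈ insert x S := hv ▸ (G.mem_neighborFinset v w).mpr h.symm
      rcases Finset.mem_insert.mp this with h' | h'
      · exact hwx h'
      · exact hw h'
    have hxw : x ∉ G.neighborFinset w := by
      rw [G.mem_neighborFinset]
      intro h
      have : w ∈ insert v S := hx ▸ (G.mem_neighborFinset x w).mpr h.symm
      rcases Finset.mem_insert.mp this with h' | h'
      · exact hwv h'
      · exact hw h'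
    rw [Finset.insert_inter_of_notMem hvw, Finset.insert_inter_of_notMem hxw]

/-- P3: in the type (C) situation, a non-neighbour in `B(v)` sees exactly
`N(v) \ {p}`. -/
lemma dzP3 {n k b a : ℕ} (hG : IsStrictlyDezaGraph G n k b a) (hk : k = b + 1)
    {v p u : V} (hp : dezaB G b v ∩ G.neighborFinset v = {p})
    (hu : u ∈ dezaB G b v) (hnadj : ¬ G.Adj u v) :
    G.neighborFinset u ∩ G.neighborFinset v = (G.neighborFinset v).erase p := by
  have hreg : G.IsRegularOfDegree k := hG.1.2.2.1
  have hpmem : p ∈ dezaB G b v ∩ G.neighborFinset v := by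
    rw [hp]; exact Finset.mem_singleton_self p
  have hpB : p ∈ dezaB G b v := Finset.mem_of_mem_inter_left hpmem
  have hpN : p ∈ G.neighborFinset v := Finset.mem_of_mem_inter_right hpmem
  have hpadj : G.Adj p v := ((G.mem_neighborFinset v p).mp hpN).symm
  have hpb : commonNbrs G p v = b := (dz_mem_dezaB G |>.mp hpB).2
  have huv : u ≠ v := (dz_mem_dezaB G |>.mp hu).1
  have hub : commonNbrs G u v = b := (dz_mem_dezaB G |>.mp hu).2
  have hup : u ≠ p := by
    rintro rfl
    exact hnadj hpadj
  obtain ⟨hNp, hNv⟩ := dzP1 hreg hk hpadj hpb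
  set S := G.neighborFinset p ∩ G.neighborFinset v with hS
  have hpS : p ∉ S := fun h =>
    G.notMem_neighborFinset_self p (Finset.mem_of_mem_inter_left h)
  have hSr : S = (G.neighborFinset v).erase p := by
    rw [hNv, Finset.erase_insert hpS]
  have hcpu : commonNbrs G p u = b := by
    rw [dzP2 hreg hk hpadj hpb u hup huv, dz_comm]
    exact hub
  have hvNu : v ∉ G.neighborFinset u := by
    rw [G.mem_neighborFinset]
    exact hnadj
  have hkey : (S ∩ G.neighborFinset u).card = b := by
    have : commonNbrs G p u = (S ∩ G.neighborFinset u).card := by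
      unfold commonNbrs
      rw [hNp, Finset.insert_inter_of_notMem hvNu]
    rw [← this, hcpu]
  have hcS : S.card = b := hpb
  have h1 : S ∩ G.neighborFinset u = S :=
    Finset.eq_of_subset_of_card_le Finset.inter_subset_left (by rw [hkey, hcS])
  have hSu : S ⊆ G.neighborFinset u := by
    rw [← h1]; exact Finset.inter_subset_right
  have hSv : S ⊆ G.neighborFinset v := Finset.inter_subset_right
  have h2 : S ⊆ G.neighborFinset u ∩ G.neighborFinset v :=
    Finset.subset_inter hSu hSv
  have h3 : S = G.neighborFinset u ∩ G.neighborFinset v :=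
    Finset.eq_of_subset_of_card_le h2 (by rw [hcS]; exact le_of_eq hub)
  rw [← h3, hSr]

end DezaAux
section DezaAux2

variable {V : Type u} [Fintype V] [DecidableEq V] {G : SimpleGraph V}
    [DecidableRel G.Adj]

lemma dz_sum_common {k : ℕ} (hreg : G.IsRegularOfDegree k) (u : V) :
    ∑ w ∈ Finset.univ.erase u, commonNbrs G u w = k * (k - 1) := by
  have step1 : ∀ w : V, commonNbrs G u w =
      ∑ x ∈ G.neighborFinset u, if w ∈ G.neighborFinset x then 1 else 0 := by
    intro w
    rw [commonNbrs, ← Finset.card_filter]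
    congr 1
    ext x
    simp only [Finset.mem_inter, Finset.mem_filter, G.mem_neighborFinset]
    exact and_congr_right fun _ => ⟨fun h => h.symm, fun h => h.symm⟩
  calc ∑ w ∈ Finset.univ.erase u, commonNbrs G u w
      = ∑ w ∈ Finset.univ.erase u, ∑ x ∈ G.neighborFinset u,
          if w ∈ G.neighborFinset x then 1 else 0 :=
        Finset.sum_congr rfl fun w _ => step1 w
    _ = ∑ x ∈ G.neighborFinset u, ∑ w ∈ Finset.univ.erase u,
          if w ∈ G.neighborFinset x then 1 else 0 := Finset.sum_comm
    _ = ∑ x ∈ G.neighborFinset u, (k - 1) := by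
        refine Finset.sum_congr rfl fun x hx => ?_
        rw [← Finset.card_filter]
        have : (Finset.univ.erase u).filter (· ∈ G.neighborFinset x)
            = (G.neighborFinset x).erase u := by
          ext w
          simp only [Finset.mem_filter, Finset.mem_erase, Finset.mem_univ,
            true_and]
          tauto
        rw [this, Finset.card_erase_of_mem, dz_card_nbr hreg]
        rw [G.mem_neighborFinset]
        exact ((G.mem_neighborFinset u x).mp hx).symm
    _ = k * (k - 1) := by
        rw [Finset.sum_const, dz_card_nbr hreg, smul_eq_mul]

lemma dz_beta_const {n k b a : ℕ} (hG : IsStrictlyDezaGraph G n k b a)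
    (u v : V) : (dezaB G b u).card = (dezaB G b v).card := by
  have hreg : G.IsRegularOfDegree k := hG.1.2.2.1
  have hdich : ∀ x y : V, x ≠ y →
      commonNbrs G x y = b ∨ commonNbrs G x y = a := hG.1.2.2.2.2
  have hba' : a < b := dz_lt hG
  have key : ∀ x : V, a * (Fintype.card V - 1) + (b - a) * (dezaB G b x).card
      = k * (k - 1) := by
    intro x
    have hsplit : Finset.univ.erase x = dezaB G b x ∪ dezaA G a x := by
      ext w
      simp only [Finset.mem_erase, Finset.mem_univ, and_true, Finset.mem_union,
        dezaB, dezaA, Finset.mem_filter, true_and]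
      constructor
      · intro hw
        rcases hdich w x hw with h | h
        · exact Or.inl ⟨hw, h⟩
        · exact Or.inr ⟨hw, h⟩
      · rintro (⟨hw, _⟩ | ⟨hw, _⟩) <;> exact hw
    have hdisj : Disjoint (dezaB G b x) (dezaA G a x) := by
      rw [Finset.disjoint_left]
      intro w hwB hwA
      simp only [dezaB, dezaA, Finset.mem_filter] at hwB hwA
      exact absurd (hwB.2.2 ▸ hwA.2.2) hba'.ne'
    have hsum := dz_sum_common hreg x
    rw [hsplit, Finset.sum_union hdisj] at hsum
    have hsB : ∑ w ∈ dezaB G b x, commonNbrs G x w = b * (dezaB G b x).card := by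
      rw [Finset.sum_congr rfl (fun w hw => ?_), Finset.sum_const, smul_eq_mul,
        mul_comm]
      rw [dz_comm]
      exact (dz_mem_dezaB G |>.mp hw).2
    have hsA : ∑ w ∈ dezaA G a x, commonNbrs G x w = a * (dezaA G a x).card := by
      rw [Finset.sum_congr rfl (fun w hw => ?_), Finset.sum_const, smul_eq_mul,
        mul_comm]
      rw [dz_comm]
      simp only [dezaA, Finset.mem_filter] at hw
      exact hw.2.2
    rw [hsB, hsA] at hsum
    have hcards : (dezaB G b x).card + (dezaA G a x).card = Fintype.card V - 1 := by
      rw [← Finset.card_union_of_disjoint hdisj, ← hsplit,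
        Finset.card_erase_of_mem (Finset.mem_univ x), Finset.card_univ]
    rw [← hsum, ← hcards]
    have hb' : b = a + (b - a) := by omega
    set β := (dezaB G b x).card
    set α := (dezaA G a x).card
    calc a * (β + α) + (b - a) * β = (a + (b - a)) * β + a * α := by ring
      _ = b * β + a * α := by rw [← hb']
  have := (key u).trans (key v).symm
  have h2 := Nat.add_left_cancel this
  exact Nat.eq_of_mul_eq_mul_left (by omega) h2

lemma dz_pair_gen {n k b a : ℕ} (hG : IsStrictlyDezaGraph G n k b a)
    (hk : k = b + 1) {v : V}
    (hno : ∀ t ∈ dezaB G b v, ∀ s ∈ dezaB G b v, ¬ G.Adj t v → ¬ G.Adj s v →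
      t ≠ s → commonNbrs G t s = b) :
    ∀ t ∈ dezaBc G b v, ∀ s ∈ dezaBc G b v, t ≠ s → commonNbrs G t s = b := by
  have hreg : G.IsRegularOfDegree k := hG.1.2.2.1
  intro t ht s hs hts
  rcases Finset.mem_insert.mp ht with rfl | htB
  · rcases Finset.mem_insert.mp hs with rfl | hsB
    · exact absurd rfl hts
    · rw [dz_comm]; exact (dz_mem_dezaB G |>.mp hsB).2
  · rcases Finset.mem_insert.mp hs with rfl | hsB
    · exact (dz_mem_dezaB G |>.mp htB).2
    · have htv : t ≠ v := (dz_mem_dezaB G |>.mp htB).1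
      have hsv : s ≠ v := (dz_mem_dezaB G |>.mp hsB).1
      have htb : commonNbrs G t v = b := (dz_mem_dezaB G |>.mp htB).2
      have hsb : commonNbrs G s v = b := (dz_mem_dezaB G |>.mp hsB).2
      by_cases hta : G.Adj t v
      · rw [dzP2 hreg hk hta htb s (hts.symm) hsv, dz_comm]
        exact hsb
      · by_cases hsa : G.Adj s v
        · rw [dz_comm, dzP2 hreg hk hsa hsb t hts htv, dz_comm]
          exact htb
        · exact hno t htB s hsB hta hsa hts

lemma dz_Bc_eq {n k b a : ℕ} (hG : IsStrictlyDezaGraph G n k b a)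
    {v u : V} (hu : u ∈ dezaB G b v)
    (hpair : ∀ t ∈ dezaBc G b v, ∀ s ∈ dezaBc G b v, t ≠ s →
      commonNbrs G t s = b) :
    dezaBc G b u = dezaBc G b v := by
  have huBc : u ∈ dezaBc G b v := dz_subset_dezaBc _ _ hu
  have hsub : dezaBc G b v ⊆ dezaBc G b u := by
    intro t ht
    by_cases htu : t = u
    · rw [htu]; exact dz_self_mem_dezaBc _ _
    · exact dz_subset_dezaBc _ _ ((dz_mem_dezaB G).mpr ⟨htu, hpair t ht u huBc htu⟩)
  have hvB : v ∉ dezaB G b v := fun h => ((dz_mem_dezaB G).mp h).1 rfl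
  have huB : u ∉ dezaB G b u := fun h => ((dz_mem_dezaB G).mp h).1 rfl
  have hcards : (dezaBc G b u).card = (dezaBc G b v).card := by
    unfold dezaBc
    rw [Finset.card_insert_of_notMem huB, Finset.card_insert_of_notMem hvB,
      dz_beta_const hG u v]
  exact (Finset.eq_of_subset_of_card_le hsub (le_of_eq hcards)).symm

end DezaAux2
theorem stmt13 {V : Type u} [Fintype V] [DecidableEq V] (G : SimpleGraph V)
    [DecidableRel G.Adj] (n k b a : ℕ)
    (hG : IsStrictlyDezaGraph G n k b a) (hk : k = b + 1)
    (hβ : ∀ v : V, 1 < (dezaB G b v).card) :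
    (∀ x u : V, IsTypeB G b x → u ∈ dezaB G b x →
      dezaBc G b u = dezaBc G b x ∧ IsTypeB G b u) ∧
    (∀ x u : V, IsTypeC G b x → u ∈ dezaB G b x →
      dezaBc G b u = dezaBc G b x ∧ IsTypeC G b u) := by
  have hreg : G.IsRegularOfDegree k := hG.1.2.2.1
  have hdich : ∀ x y : V, x ≠ y →
      commonNbrs G x y = b ∨ commonNbrs G x y = a := hG.1.2.2.2.2
  have hba : a < b := dz_lt hG
  constructor
  · -- type (B)
    intro x u hx hu
    have hno : ∀ t ∈ dezaB G b x, ∀ s ∈ dezaB G b x, ¬ G.Adj t x → ¬ G.Adj s x →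
        t ≠ s → commonNbrs G t s = b := by
      intro t ht _ _ hta _ _
      exact absurd (((G.mem_neighborFinset x t).mp (hx ht)).symm) hta
    have hpair := dz_pair_gen hG hk hno
    have hBc := dz_Bc_eq hG hu hpair
    refine ⟨hBc, ?_⟩
    have hadj : G.Adj u x := ((G.mem_neighborFinset x u).mp (hx hu)).symm
    have hub : commonNbrs G u x = b := ((dz_mem_dezaB G).mp hu).2
    obtain ⟨hNu, hNx⟩ := dzP1 hreg hk hadj hub
    intro t ht
    have htBc : t ∈ dezaBc G b x := by rw [← hBc]; exact dz_subset_dezaBc _ _ ht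
    have htu : t ≠ u := ((dz_mem_dezaB G).mp ht).1
    rcases dz_mem_dezaBc.mp htBc with rfl | htB
    · rw [hNu]; exact Finset.mem_insert_self _ _
    · have h2 : t ∈ G.neighborFinset x := hx htB
      rw [hNx] at h2
      rcases Finset.mem_insert.mp h2 with h | h
      · exact absurd h htu
      · exact Finset.mem_of_mem_inter_left h
  · -- type (C)
    intro x u hxC hu
    obtain ⟨p, hp⟩ := Finset.card_eq_one.mp hxC
    have hno : ∀ t ∈ dezaB G b x, ∀ s ∈ dezaB G b x, ¬ G.Adj t x → ¬ G.Adj s x →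
        t ≠ s → commonNbrs G t s = b := by
      intro t ht s hs hta hsa hts
      have h1 := dzP3 hG hk hp ht hta
      have h2 := dzP3 hG hk hp hs hsa
      have hsubts : (G.neighborFinset x).erase p ⊆
          G.neighborFinset t ∩ G.neighborFinset s := by
        refine Finset.subset_inter ?_ ?_
        · rw [← h1]; exact Finset.inter_subset_left
        · rw [← h2]; exact Finset.inter_subset_left
      have hpN : p ∈ G.neighborFinset x := by
        have hpm : p ∈ dezaB G b x ∩ G.neighborFinset x := by
          rw [hp]; exact Finset.mem_singleton_self p
        exact Finset.mem_of_mem_inter_right hpm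
      have hcb : ((G.neighborFinset x).erase p).card = b := by
        rw [Finset.card_erase_of_mem hpN, dz_card_nbr hreg, hk]
        omega
      have hle : b ≤ commonNbrs G t s := hcb ▸ Finset.card_le_card hsubts
      rcases hdich t s hts with h | h
      · exact h
      · omega
    have hpair := dz_pair_gen hG hk hno
    have hBc := dz_Bc_eq hG hu hpair
    refine ⟨hBc, ?_⟩
    -- basic facts about `p`
    have hpmem : p ∈ dezaB G b x ∩ G.neighborFinset x := by
      rw [hp]; exact Finset.mem_singleton_self p
    have hpB : p ∈ dezaB G b x := Finset.mem_of_mem_inter_left hpmem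
    have hpN : p ∈ G.neighborFinset x := Finset.mem_of_mem_inter_right hpmem
    have hpadj : G.Adj p x := ((G.mem_neighborFinset x p).mp hpN).symm
    have hpb : commonNbrs G p x = b := ((dz_mem_dezaB G).mp hpB).2
    obtain ⟨hNp, hNx⟩ := dzP1 hreg hk hpadj hpb
    set S := G.neighborFinset p ∩ G.neighborFinset x with hSdef
    have hpS : p ∉ S := fun h =>
      G.notMem_neighborFinset_self p (Finset.mem_of_mem_inter_left h)
    have hxS : x ∉ S := fun h =>
      G.notMem_neighborFinset_self x (Finset.mem_of_mem_inter_right h)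
    have hRS : (G.neighborFinset x).erase p = S := by
      rw [hNx, Finset.erase_insert hpS]
    have hSx : S ⊆ G.neighborFinset x := Finset.inter_subset_right
    have hcS : S.card = b := hpb
    have hBcp : dezaBc G b p = dezaBc G b x := dz_Bc_eq hG hpB hpair
    have hune : u ≠ x := ((dz_mem_dezaB G).mp hu).1
    have hub : commonNbrs G u x = b := ((dz_mem_dezaB G).mp hu).2
    by_cases hadj : G.Adj u x
    · -- adjacent case: `u = p`
      have hup : u = p := by
        have : u ∈ dezaB G b x ∩ G.neighborFinset x :=
          Finset.mem_inter.mpr ⟨hu, (G.mem_neighborFinset x u).mpr hadj.symm⟩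
        rw [hp] at this
        exact Finset.mem_singleton.mp this
      subst hup
      have hkey : dezaB G b u ∩ G.neighborFinset u = {x} := by
        ext t
        simp only [Finset.mem_inter, Finset.mem_singleton]
        constructor
        · rintro ⟨ht1, ht2⟩
          have htBc : t ∈ dezaBc G b x := by rw [← hBc]; exact dz_subset_dezaBc _ _ ht1
          rw [hNp] at ht2
          rcases Finset.mem_insert.mp ht2 with rfl | htS
          · rfl
          · exfalso
            rcases dz_mem_dezaBc.mp htBc with rfl | htB
            · exact G.notMem_neighborFinset_self t (hSx htS)
            · have : t ∈ dezaB G b x ∩ G.neighborFinset x :=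
                Finset.mem_inter.mpr ⟨htB, hSx htS⟩
              rw [hp] at this
              exact hpS ((Finset.mem_singleton.mp this) ▸ htS)
        · intro ht
          rw [ht]
          refine ⟨?_, ?_⟩
          · have hxBc : x ∈ dezaBc G b u := by rw [hBc]; exact dz_self_mem_dezaBc _ _
            rcases dz_mem_dezaBc.mp hxBc with h | h
            · exact absurd h.symm hpadj.ne
            · exact h
          · rw [hNp]; exact Finset.mem_insert_self _ _
      unfold IsTypeC
      rw [hkey, Finset.card_singleton]
    · -- nonadjacent case
      have hstruct : G.neighborFinset u ∩ G.neighborFinset x = S := by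
        rw [dzP3 hG hk hp hu hadj, hRS]
      have hSu : S ⊆ G.neighborFinset u := by
        rw [← hstruct]; exact Finset.inter_subset_left
      have hxNu : x ∉ G.neighborFinset u := fun h =>
        hadj ((G.mem_neighborFinset u x).mp h)
      have huNx : u ∉ G.neighborFinset x := fun h =>
        hadj ((G.mem_neighborFinset x u).mp h).symm
      have hsd : (G.neighborFinset u \ S).card = 1 := by
        rw [Finset.card_sdiff_of_subset hSu, dz_card_nbr hreg, hcS, hk]
        omega
      obtain ⟨y, hy⟩ := Finset.card_eq_one.mp hsd
      have hymem : y ∈ G.neighborFinset u \ S := by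
        rw [hy]; exact Finset.mem_singleton_self y
      have hyNu : y ∈ G.neighborFinset u := (Finset.mem_sdiff.mp hymem).1
      have hyS : y ∉ S := (Finset.mem_sdiff.mp hymem).2
      have hNu : G.neighborFinset u = insert y S := by
        rw [← Finset.sdiff_union_of_subset hSu, hy, ← Finset.insert_eq]
      have hyArg : ∀ r ∈ S, y ∈ G.neighborFinset r := by
        intro r hr
        have hrx : r ∈ G.neighborFinset x := hSx hr
        have hrp : r ≠ p := fun h => hpS (h ▸ hr)
        have hrxne : r ≠ x := fun h => hxS (h ▸ hr)
        have hru : r ≠ u := fun h => huNx (h ▸ hrx)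
        have hnotBp : r ∉ dezaB G b p := by
          intro hrB
          have h' : r ∈ dezaBc G b x := by rw [← hBcp]; exact dz_subset_dezaBc _ _ hrB
          rcases dz_mem_dezaBc.mp h' with h | h
          · exact hrxne h
          · have : r ∈ dezaB G b x ∩ G.neighborFinset x :=
              Finset.mem_inter.mpr ⟨h, hrx⟩
            rw [hp] at this
            exact hrp (Finset.mem_singleton.mp this)
        have hnotBu : r ∉ dezaB G b u := by
          intro hrB
          have h' : r ∈ dezaBc G b x := by rw [← hBc]; exact dz_subset_dezaBc _ _ hrB
          rcases dz_mem_dezaBc.mp h' with h | h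
          · exact hrxne h
          · have : r ∈ dezaB G b x ∩ G.neighborFinset x :=
              Finset.mem_inter.mpr ⟨h, hrx⟩
            rw [hp] at this
            exact hrp (Finset.mem_singleton.mp this)
        have hrpa : commonNbrs G r p = a := by
          rcases hdich r p hrp with h | h
          · exact absurd ((dz_mem_dezaB G).mpr ⟨hrp, h⟩) hnotBp
          · exact h
        have hrua : commonNbrs G r u = a := by
          rcases hdich r u hru with h | h
          · exact absurd ((dz_mem_dezaB G).mpr ⟨hru, h⟩) hnotBu
          · exact h
        have hxNr : x ∈ G.neighborFinset r :=
          (G.mem_neighborFinset r x).mpr ((G.mem_neighborFinset x r).mp hrx).symm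
        have hxSr : x ∉ S ∩ G.neighborFinset r := fun h =>
          hxS (Finset.mem_of_mem_inter_left h)
        have e1 : a = (S ∩ G.neighborFinset r).card + 1 := by
          rw [← hrpa, dz_comm]
          unfold commonNbrs
          rw [hNp, Finset.insert_inter_of_mem hxNr,
            Finset.card_insert_of_notMem hxSr]
        by_cases hyr : y ∈ G.neighborFinset r
        · exact hyr
        · exfalso
          have e2 : a = (S ∩ G.neighborFinset r).card := by
            rw [← hrua, dz_comm]
            unfold commonNbrs
            rw [hNu, Finset.insert_inter_of_notMem hyr]
          omega
      have huNy : u ∈ G.neighborFinset y :=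
        (G.mem_neighborFinset y u).mpr ((G.mem_neighborFinset u y).mp hyNu).symm
      have huS : u ∉ S := fun h => huNx (hSx h)
      have hins : insert u S ⊆ G.neighborFinset y := by
        refine Finset.insert_subset huNy ?_
        intro r hr
        exact (G.mem_neighborFinset y r).mpr
          ((G.mem_neighborFinset r y).mp (hyArg r hr)).symm
      have hNy : G.neighborFinset y = insert u S :=
        (Finset.eq_of_subset_of_card_le hins (by
          rw [Finset.card_insert_of_notMem huS, hcS, dz_card_nbr hreg, hk])).symm
      have hyx : y ≠ x := fun h => hxNu (h ▸ hyNu)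
      have hyxb : commonNbrs G y x = b := by
        unfold commonNbrs
        have : G.neighborFinset y ∩ G.neighborFinset x = S := by
          rw [hNy, Finset.insert_inter_of_notMem huNx, Finset.inter_eq_left.mpr hSx]
        rw [this, hcS]
      have hyB : y ∈ dezaB G b x := (dz_mem_dezaB G).mpr ⟨hyx, hyxb⟩
      have hkey : dezaB G b u ∩ G.neighborFinset u = {y} := by
        ext t
        simp only [Finset.mem_inter, Finset.mem_singleton]
        constructor
        · rintro ⟨ht1, ht2⟩
          have htBc : t ∈ dezaBc G b x := by rw [← hBc]; exact dz_subset_dezaBc _ _ ht1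
          rw [hNu] at ht2
          rcases Finset.mem_insert.mp ht2 with rfl | htS
          · rfl
          · exfalso
            rcases dz_mem_dezaBc.mp htBc with rfl | htB
            · exact G.notMem_neighborFinset_self t (hSx htS)
            · have : t ∈ dezaB G b x ∩ G.neighborFinset x :=
                Finset.mem_inter.mpr ⟨htB, hSx htS⟩
              rw [hp] at this
              exact hpS ((Finset.mem_singleton.mp this) ▸ htS)
        · intro ht
          rw [ht]
          have hyu : y ≠ u := fun h => G.notMem_neighborFinset_self u (h ▸ hyNu)
          refine ⟨?_, hyNu⟩
          have hyBc : y ∈ dezaBc G b u := by rw [hBc]; exact dz_subset_dezaBc _ _ hyB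
          rcases dz_mem_dezaBc.mp hyBc with h | h
          · exact absurd h hyu
          · exact h
      unfold IsTypeC
      rw [hkey, Finset.card_singleton]
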